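/- Let (M,d) be a geodesic metric space and G a compact group acting on M by isometries, with Haar probability measure ν_G, such that for each fixed x the map g ↦ gx is continuous. For a Lipschitz function f : M → ℝ define its G-average f_{(G)}(x) := ∫_G f(gx) dν_G(g). Then for every q ∈ [1,∞) and every x ∈ M, (Lip f_{(G)}(x))^q ≤ ∫_G (Lip f(gx))^q dν_G(g). In particular f_{(G)} is Lipschitz continuous. -/

import Mathlib

open MeasureTheory Filter Set Metric

/-- The upper asymptotic Lipschitz constant. -/
noncomputable def upperAsympLip {X : Type*} [PseudoMetricSpace X] (f : X → ℝ) (x : X) : ℝ :=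
  limsup (fun r : ℝ => ⨆ y ∈ ball x r, |f y - f x| / r) (nhdsWithin 0 (Ioi 0))

section Aux

lemma exists_lt_of_lt_realSup {ι : Sort*} {f : ι → ℝ} {a : ℝ} (ha : 0 ≤ a)
    (h : a < ⨆ i, f i) : ∃ i, a < f i := by
  cases isEmpty_or_nonempty ι
  · rw [Real.iSup_of_isEmpty] at h; linarith
  · exact exists_lt_of_lt_ciSup h

lemma iSup_p_pos {p : Prop} (hp : p) (c : ℝ) : (⨆ _ : p, c) = c := by
  haveI : Nonempty p := ⟨hp⟩
  exact ciSup_const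

lemma iSup_p_le {p : Prop} {c a : ℝ} (h : p → c ≤ a) (ha : 0 ≤ a) : (⨆ _ : p, c) ≤ a :=
  Real.iSup_le h ha

variable {X : Type*} [PseudoMetricSpace X] {f : X → ℝ} {L : NNReal}

/-- The quantity inside the limsup defining `upperAsympLip`. -/
noncomputable def auxF (f : X → ℝ) (r : ℝ) (x : X) : ℝ :=
  ⨆ y ∈ ball x r, |f y - f x| / r

lemma upperAsympLip_eq_limsup (f : X → ℝ) (x : X) :
    upperAsympLip f x = limsup (fun r : ℝ => auxF f r x) (nhdsWithin 0 (Ioi 0)) := rfl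

lemma auxF_inner_le (hf : LipschitzWith L f) (r : ℝ) (x y : X) :
    (⨆ _ : y ∈ ball x r, |f y - f x| / r) ≤ L := by
  refine iSup_p_le (fun hy => ?_) L.coe_nonneg
  have hyx : dist y x < r := mem_ball.mp hy
  have hr : 0 < r := lt_of_le_of_lt dist_nonneg hyx
  rw [div_le_iff₀ hr]
  calc |f y - f x| = dist (f y) (f x) := (Real.dist_eq _ _).symm
    _ ≤ L * dist y x := hf.dist_le_mul y x
    _ ≤ L * r := mul_le_mul_of_nonneg_left hyx.le L.coe_nonneg

lemma auxF_bdd (hf : LipschitzWith L f) (r : ℝ) (x : X) :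
    BddAbove (range fun y => ⨆ _ : y ∈ ball x r, |f y - f x| / r) := by
  refine ⟨L, ?_⟩
  rintro z ⟨y, rfl⟩
  exact auxF_inner_le hf r x y

lemma auxF_le (hf : LipschitzWith L f) (r : ℝ) (x : X) : auxF f r x ≤ L :=
  Real.iSup_le (fun y => auxF_inner_le hf r x y) L.coe_nonneg

lemma le_auxF (hf : LipschitzWith L f) {r : ℝ} {x z : X} (hz : z ∈ ball x r) :
    |f z - f x| / r ≤ auxF f r x := by
  have h := le_ciSup (auxF_bdd hf r x) z
  rwa [iSup_p_pos hz] at h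

lemma auxF_nonneg (hf : LipschitzWith L f) {r : ℝ} (hr : 0 < r) (x : X) :
    0 ≤ auxF f r x := by
  have h := le_auxF hf (mem_ball_self hr (x := x))
  simpa using h

/-- The supremum of `auxF f r x` over `r ∈ (0, δ)`. -/
noncomputable def auxS (f : X → ℝ) (δ : ℝ) (x : X) : ℝ :=
  ⨆ r ∈ Ioo (0:ℝ) δ, auxF f r x

lemma auxS_bdd (hf : LipschitzWith L f) (δ : ℝ) (x : X) :
    BddAbove (range fun r => ⨆ _ : r ∈ Ioo (0:ℝ) δ, auxF f r x) := by
  refine ⟨L, ?_⟩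
  rintro z ⟨r, rfl⟩
  exact iSup_p_le (fun _ => auxF_le hf r x) L.coe_nonneg

lemma auxS_le (hf : LipschitzWith L f) (δ : ℝ) (x : X) : auxS f δ x ≤ L :=
  Real.iSup_le (fun r => iSup_p_le (fun _ => auxF_le hf r x) L.coe_nonneg) L.coe_nonneg

lemma auxF_le_auxS (hf : LipschitzWith L f) {r δ : ℝ} {x : X} (hr : r ∈ Ioo (0:ℝ) δ) :
    auxF f r x ≤ auxS f δ x := by
  have h := le_ciSup (auxS_bdd hf δ x) r
  rwa [iSup_p_pos hr] at h

lemma auxS_nonneg (hf : LipschitzWith L f) {δ : ℝ} (hδ : 0 < δ) (x : X) :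
    0 ≤ auxS f δ x :=
  le_trans (auxF_nonneg hf (half_pos hδ) x)
    (auxF_le_auxS hf ⟨half_pos hδ, half_lt_self hδ⟩)

lemma auxS_mono (hf : LipschitzWith L f) {δ₁ δ₂ : ℝ} (hδ : 0 < δ₁) (h : δ₁ ≤ δ₂) (x : X) :
    auxS f δ₁ x ≤ auxS f δ₂ x := by
  have h0 : 0 ≤ auxS f δ₂ x := auxS_nonneg hf (hδ.trans_le h) x
  exact Real.iSup_le
    (fun r => iSup_p_le (fun hr => auxF_le_auxS hf ⟨hr.1, lt_of_lt_of_le hr.2 h⟩) h0) h0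

lemma auxS_lsc (hf : LipschitzWith L f) {δ : ℝ} (hδ : 0 < δ) :
    LowerSemicontinuous (auxS f δ) := by
  intro x c hc
  rcases lt_or_ge c 0 with hc0 | hc0
  · exact Eventually.of_forall fun y => lt_of_lt_of_le hc0 (auxS_nonneg hf hδ y)
  · obtain ⟨r, hr⟩ := exists_lt_of_lt_realSup hc0 hc
    obtain ⟨hrI, hr2⟩ := exists_lt_of_lt_realSup hc0 hr
    obtain ⟨z, hz⟩ := exists_lt_of_lt_realSup hc0 hr2
    obtain ⟨hzball, hz2⟩ := exists_lt_of_lt_realSup hc0 hz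
    have hzb : dist z x < r := mem_ball.mp hzball
    have hopen : IsOpen {y : X | dist z y < r ∧ c < |f z - f y| / r} := by
      rw [setOf_and]
      exact IsOpen.inter
        (isOpen_lt (continuous_const.dist continuous_id) continuous_const)
        (isOpen_lt continuous_const
          (((continuous_const.sub hf.continuous).abs).div_const r))
    have hx : x ∈ {y : X | dist z y < r ∧ c < |f z - f y| / r} := ⟨hzb, hz2⟩
    filter_upwards [hopen.mem_nhds hx] with y hy
    calc c < |f z - f y| / r := hy.2
      _ ≤ auxF f r y := le_auxF hf (mem_ball.mpr hy.1)
      _ ≤ auxS f δ y := auxF_le_auxS hf hrI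

lemma one_div_nat_succ_pos (n : ℕ) : (0:ℝ) < 1 / (n + 1) := by positivity

/-- The upper asymptotic Lipschitz constant as a countable infimum. -/
lemma upperAsympLip_eq (hf : LipschitzWith L f) (y : X) :
    upperAsympLip f y = ⨅ n : ℕ, auxS f (1 / (n + 1)) y := by
  have hbb : BddBelow (range fun n : ℕ => auxS f (1 / (n + 1)) y) := by
    refine ⟨0, ?_⟩
    rintro z ⟨m, rfl⟩
    exact auxS_nonneg hf (one_div_nat_succ_pos m) y
  apply le_antisymm
  · refine le_ciInf fun n => ?_
    rw [upperAsympLip_eq_limsup]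
    refine limsup_le_of_le (isCoboundedUnder_le_of_eventually_le (x := (0:ℝ)) _ ?_) ?_
    · filter_upwards [self_mem_nhdsWithin] with r hr
      exact auxF_nonneg hf hr y
    · filter_upwards [Ioo_mem_nhdsGT_of_mem ⟨le_refl (0:ℝ), one_div_nat_succ_pos n⟩]
        with r hr
      exact auxF_le_auxS hf hr
  · rw [upperAsympLip_eq_limsup, limsup_eq]
    refine le_csInf ⟨L, ?_⟩ fun a ha => ?_
    · filter_upwards [self_mem_nhdsWithin] with r _
      exact auxF_le hf r y
    · have ha' : {r : ℝ | auxF f r y ≤ a} ∈ nhdsWithin 0 (Ioi 0) := ha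
      obtain ⟨u, hu, hsub⟩ := mem_nhdsGT_iff_exists_Ioo_subset.mp ha'
      have hu' : (0:ℝ) < u := hu
      have ha0 : 0 ≤ a :=
        le_trans (auxF_nonneg hf (half_pos hu') y) (hsub ⟨half_pos hu', half_lt_self hu'⟩)
      obtain ⟨n, hn⟩ := exists_nat_one_div_lt hu'
      refine le_trans (ciInf_le hbb n) ?_
      exact Real.iSup_le
        (fun r => iSup_p_le (fun hr => hsub ⟨hr.1, hr.2.trans hn⟩) ha0) ha0

end Aux

/-- Let `(M,d)` be a geodesic metric space, `G` a compact group acting by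
isometries with Haar probability measure `νG` and continuous orbit maps.  For a Lipschitz
`f : M → ℝ`, the `G`-average `f_G(x) = ∫_G f (g • x) dνG(g)` satisfies, for every
`q ∈ [1,∞)` and every `x`, `(Lip f_G (x))^q ≤ ∫_G (Lip f (g • x))^q dνG(g)`;
in particular `f_G` is Lipschitz continuous. -/
theorem gAverage_asympLip_bound
    {M : Type*} [MetricSpace M]
    (hgeo : ∀ a b : M, ∃ γ : ℝ → M, γ 0 = a ∧ γ 1 = b ∧
      ∀ s ∈ Icc (0:ℝ) 1, ∀ t ∈ Icc (0:ℝ) 1, dist (γ s) (γ t) = |s - t| * dist a b)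
    {G : Type*} [Group G] [TopologicalSpace G] [IsTopologicalGroup G] [CompactSpace G]
    [MeasurableSpace G] [BorelSpace G] [MulAction G M]
    (hcont : ∀ x : M, Continuous fun g : G => g • x)
    (hiso : ∀ (g : G) (x y : M), dist (g • x) (g • y) = dist x y)
    (νG : Measure G) [IsProbabilityMeasure νG] [νG.IsMulLeftInvariant]
    (f : M → ℝ) (L : NNReal) (hf : LipschitzWith L f)
    (q : ℝ) (hq : 1 ≤ q) :
    (∀ x : M,
      upperAsympLip (fun z => ∫ g, f (g • z) ∂νG) x ^ q
        ≤ ∫ g, upperAsympLip f (g • x) ^ q ∂νG) ∧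
    ∃ C : NNReal, LipschitzWith C fun z => ∫ g, f (g • z) ∂νG := by
  set fG : M → ℝ := fun z => ∫ g, f (g • z) ∂νG with hfG
  -- integrability of the orbit maps
  have hInt : ∀ z : M, Integrable (fun g : G => f (g • z)) νG := by
    intro z
    have hc : Continuous fun g : G => f (g • z) := hf.continuous.comp (hcont z)
    obtain ⟨C, hC⟩ := (isCompact_univ (X := G)).exists_bound_of_continuousOn hc.continuousOn
    exact (integrable_const C).mono' hc.aestronglyMeasurable
      (Eventually.of_forall fun g => hC g (mem_univ g))
  -- fG is Lipschitz with constant L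
  have hLG : LipschitzWith L fG := by
    refine LipschitzWith.of_dist_le_mul fun y z => ?_
    have h1 : fG y - fG z = ∫ g, (f (g • y) - f (g • z)) ∂νG :=
      (integral_sub (hInt y) (hInt z)).symm
    rw [Real.dist_eq, h1]
    calc |∫ g, (f (g • y) - f (g • z)) ∂νG|
        ≤ ∫ g, |f (g • y) - f (g • z)| ∂νG := by
          simpa [Real.norm_eq_abs] using
            norm_integral_le_integral_norm (fun g : G => f (g • y) - f (g • z)) (μ := νG)
      _ ≤ ∫ _g, (L : ℝ) * dist y z ∂νG := by
          refine integral_mono ((hInt y).sub (hInt z)).abs (integrable_const _) fun g => ?_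
          calc |f (g • y) - f (g • z)| = dist (f (g • y)) (f (g • z)) :=
                (Real.dist_eq _ _).symm
            _ ≤ L * dist (g • y) (g • z) := hf.dist_le_mul _ _
            _ = L * dist y z := by rw [hiso]
      _ = (L : ℝ) * dist y z := by simp
  refine ⟨?_, L, hLG⟩
  intro x
  -- the approximating integrands
  set s : ℕ → G → ℝ := fun n g => auxS f (1 / (n + 1)) (g • x) with hs
  set ψ : G → ℝ := fun g => ⨅ n : ℕ, s n g with hψ
  have hδpos : ∀ n : ℕ, (0:ℝ) < 1 / (n + 1) := one_div_nat_succ_pos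
  have h_meas : ∀ n : ℕ, Measurable (s n) := by
    intro n
    have hlsc : LowerSemicontinuous (s n) := by
      intro g c hc
      exact ((hcont x).tendsto g).eventually ((auxS_lsc hf (hδpos n)) (g • x) c hc)
    exact hlsc.measurable
  have hs_nonneg : ∀ n g, 0 ≤ s n g := fun n g => auxS_nonneg hf (hδpos n) _
  have hs_le : ∀ n g, s n g ≤ L := fun n g => auxS_le hf _ _
  have h_int_s : ∀ n : ℕ, Integrable (s n) νG := by
    intro n
    refine (integrable_const (L : ℝ)).mono' (h_meas n).aestronglyMeasurable
      (Eventually.of_forall fun g => ?_)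
    rw [Real.norm_eq_abs, abs_of_nonneg (hs_nonneg n g)]
    exact hs_le n g
  have hbb : ∀ g, BddBelow (range fun n : ℕ => s n g) := by
    intro g
    exact ⟨0, by rintro z ⟨m, rfl⟩; exact hs_nonneg m g⟩
  have h_anti : ∀ g, Antitone fun n : ℕ => s n g := by
    intro g
    refine antitone_nat_of_succ_le fun k => ?_
    refine auxS_mono hf (hδpos (k + 1)) ?_ _
    refine one_div_le_one_div_of_le (by positivity) ?_
    push_cast
    linarith
  have hψ_nonneg : ∀ g, 0 ≤ ψ g := fun g => le_ciInf fun n => hs_nonneg n g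
  have hψ_le : ∀ g, ψ g ≤ L := fun g => le_trans (ciInf_le (hbb g) 0) (hs_le 0 g)
  have h_meas_ψ : Measurable ψ := Measurable.iInf h_meas
  have h_int_ψ : Integrable ψ νG := by
    refine (integrable_const (L : ℝ)).mono' h_meas_ψ.aestronglyMeasurable
      (Eventually.of_forall fun g => ?_)
    rw [Real.norm_eq_abs, abs_of_nonneg (hψ_nonneg g)]
    exact hψ_le g
  have h_tend : ∀ g, Tendsto (fun n => s n g) atTop (nhds (ψ g)) := fun g =>
    tendsto_atTop_ciInf (h_anti g) (hbb g)
  have h_tend_int : Tendsto (fun n => ∫ g, s n g ∂νG) atTop (nhds (∫ g, ψ g ∂νG)) := by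
    refine tendsto_integral_of_dominated_convergence (fun _ => (L : ℝ))
      (fun n => (h_meas n).aestronglyMeasurable) (integrable_const _)
      (fun n => Eventually.of_forall fun g => ?_) (Eventually.of_forall h_tend)
    rw [Real.norm_eq_abs, abs_of_nonneg (hs_nonneg n g)]
    exact hs_le n g
  -- key inequality: for small r, auxF fG r x is dominated by ∫ s n
  have keyA : ∀ n : ℕ, ∀ r ∈ Ioo (0:ℝ) (1 / (n + 1)), auxF fG r x ≤ ∫ g, s n g ∂νG := by
    rintro n r ⟨hr0, hrlt⟩
    have hInt0 : 0 ≤ ∫ g, s n g ∂νG := integral_nonneg fun g => hs_nonneg n g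
    refine Real.iSup_le (fun y => iSup_p_le (fun hy => ?_) hInt0) hInt0
    have h1 : fG y - fG x = ∫ g, (f (g • y) - f (g • x)) ∂νG :=
      (integral_sub (hInt y) (hInt x)).symm
    calc |fG y - fG x| / r
        = |∫ g, (f (g • y) - f (g • x)) ∂νG| / r := by rw [h1]
      _ ≤ (∫ g, |f (g • y) - f (g • x)| ∂νG) / r := by
          apply div_le_div_of_nonneg_right ?_ hr0.le
          · simpa [Real.norm_eq_abs] using
              norm_integral_le_integral_norm (fun g : G => f (g • y) - f (g • x)) (μ := νG)
      _ = ∫ g, |f (g • y) - f (g • x)| / r ∂νG := (integral_div r _).symm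
      _ ≤ ∫ g, s n g ∂νG := by
          refine integral_mono (((hInt y).sub (hInt x)).abs.div_const r) (h_int_s n)
            fun g => ?_
          have hball : g • y ∈ ball (g • x) r := by
            rw [mem_ball, hiso]
            exact mem_ball.mp hy
          exact le_trans (le_auxF hf hball) (auxF_le_auxS hf ⟨hr0, hrlt⟩)
  -- limsup bound
  have hB : ∀ n : ℕ, upperAsympLip fG x ≤ ∫ g, s n g ∂νG := by
    intro n
    rw [upperAsympLip_eq_limsup]
    refine limsup_le_of_le (isCoboundedUnder_le_of_eventually_le (x := (0:ℝ)) _ ?_) ?_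
    · filter_upwards [self_mem_nhdsWithin] with r hr
      exact auxF_nonneg hLG hr x
    · filter_upwards [Ioo_mem_nhdsGT_of_mem ⟨le_refl (0:ℝ), hδpos n⟩] with r hr
      exact keyA n r hr
  have hB' : upperAsympLip fG x ≤ ∫ g, ψ g ∂νG := ge_of_tendsto' h_tend_int hB
  have h0 : 0 ≤ upperAsympLip fG x := by
    rw [upperAsympLip_eq_limsup]
    refine le_limsup_of_frequently_le ?_ (isBoundedUnder_of ⟨L, fun r => auxF_le hLG r x⟩)
    refine Eventually.frequently ?_
    filter_upwards [self_mem_nhdsWithin] with r hr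
    exact auxF_nonneg hLG hr x
  have hq0 : (0:ℝ) ≤ q := le_trans zero_le_one hq
  -- Jensen's inequality
  have h_int_ψq : Integrable (fun g => ψ g ^ q) νG := by
    refine (integrable_const ((L : ℝ) ^ q)).mono'
      (((Real.continuous_rpow_const hq0).measurable.comp h_meas_ψ).aestronglyMeasurable) (Eventually.of_forall fun g => ?_)
    rw [Real.norm_eq_abs, abs_of_nonneg (Real.rpow_nonneg (hψ_nonneg g) q)]
    exact Real.rpow_le_rpow (hψ_nonneg g) (hψ_le g) hq0
  have jensen : (∫ g, ψ g ∂νG) ^ q ≤ ∫ g, ψ g ^ q ∂νG := by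
    have hconv : ConvexOn ℝ (Ici (0:ℝ)) fun t : ℝ => t ^ q := convexOn_rpow hq
    have hcont' : ContinuousOn (fun t : ℝ => t ^ q) (Ici (0:ℝ)) := fun t _ =>
      (Real.continuousAt_rpow_const t q (Or.inr hq0)).continuousWithinAt
    exact hconv.map_integral_le hcont' isClosed_Ici
      (Eventually.of_forall fun g => hψ_nonneg g) h_int_ψ h_int_ψq
  have hRHS : (∫ g, upperAsympLip f (g • x) ^ q ∂νG) = ∫ g, ψ g ^ q ∂νG := by
    refine integral_congr_ae (Eventually.of_forall fun g => ?_)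
    show upperAsympLip f (g • x) ^ q = ψ g ^ q
    rw [upperAsympLip_eq hf]
  rw [hRHS]
  calc upperAsympLip fG x ^ q ≤ (∫ g, ψ g ∂νG) ^ q :=
        Real.rpow_le_rpow h0 hB' hq0
    _ ≤ ∫ g, ψ g ^ q ∂νG := jensen
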